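/- For every λ ∈ ℂ, the discrete Wronskian of the solutions I^+(λ) and I^−(λ), namely √n (I_n^+(λ) I_{n+1}^−(λ) − I_{n+1}^+(λ) I_n^−(λ)), equals i e^{λ²/2}/√(2π) (in particular it is independent of n and nonzero, so I^+ and I^− are linearly independent). -/

import Mathlib

open Complex

/-- The complementary error function, extended to `ℂ`:
`erfc z = (2/√π) ∫_0^∞ e^{-(z+t)²} dt`. -/
noncomputable def cerfc (z : ℂ) : ℂ :=
  (2 / (Real.sqrt Real.pi : ℂ)) * ∫ t in Set.Ioi (0 : ℝ), Complex.exp (-(z + (t : ℂ)) ^ 2)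

/-- The Faddeeva (error) function `w(z) = e^{-z²} erfc(-iz)`. -/
noncomputable def faddeeva (z : ℂ) : ℂ := Complex.exp (-z ^ 2) * cerfc (-I * z)

section Aux

open MeasureTheory Set

lemma int_aux (K c : ℝ) :
    Integrable (fun t : ℝ => (K + t) * Real.exp (-(t + c) ^ 2)) := by
  have h1 : Integrable (fun s : ℝ => (K - c) * Real.exp (-1 * s ^ 2) + s * Real.exp (-1 * s ^ 2)) :=
    ((integrable_exp_neg_mul_sq one_pos).const_mul _).add (integrable_mul_exp_neg_mul_sq one_pos)
  have h2 := h1.comp_add_right c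
  refine h2.congr (Filter.Eventually.of_forall fun t => ?_)
  simp only [neg_one_mul]
  ring

lemma norm_gauss (w : ℂ) (t : ℝ) :
    ‖Complex.exp (-(w + (t : ℂ)) ^ 2)‖ = Real.exp (w.im ^ 2 - (w.re + t) ^ 2) := by
  rw [Complex.norm_exp]
  congr 1
  rw [pow_two]
  simp [Complex.mul_re]
  ring

lemma integrableOn_gauss (z : ℂ) :
    IntegrableOn (fun t : ℝ => Complex.exp (-(z + (t : ℂ)) ^ 2)) (Set.Ioi 0) := by
  have hc : Continuous fun t : ℝ => Complex.exp (-(z + (t : ℂ)) ^ 2) := by continuity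
  have h1 : IntegrableOn (fun t : ℝ => (Real.exp (z.im ^ 2) + t) * Real.exp (-(t + z.re) ^ 2))
      (Set.Ioi 0) := (int_aux _ _).integrableOn
  refine h1.mono' hc.aestronglyMeasurable ?_
  rw [ae_restrict_iff' measurableSet_Ioi]
  refine Filter.Eventually.of_forall fun t ht => ?_
  rw [norm_gauss, Real.exp_sub, div_eq_mul_inv, ← Real.exp_neg]
  have h2 : Real.exp (z.im ^ 2) * Real.exp (-(z.re + t) ^ 2)
      ≤ (Real.exp (z.im ^ 2) + t) * Real.exp (-(t + z.re) ^ 2) := by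
    rw [show t + z.re = z.re + t by ring]
    have := (Real.exp_pos (-(z.re + t) ^ 2)).le
    nlinarith [le_of_lt (Set.mem_Ioi.mp ht)]
  simpa using h2

lemma hasDerivAt_gauss (t : ℝ) (x : ℂ) :
    HasDerivAt (fun w : ℂ => Complex.exp (-(w + (t : ℂ)) ^ 2))
      (Complex.exp (-(x + (t : ℂ)) ^ 2) * (-2 * (x + (t : ℂ)))) x := by
  have h1 : HasDerivAt (fun w : ℂ => -(w + (t : ℂ)) ^ 2) (-2 * (x + (t : ℂ))) x := by
    have h := (((hasDerivAt_id x).add_const (t : ℂ)).pow 2).neg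
    refine h.congr_deriv ?_
    simp
  exact h1.cexp

lemma hasDerivAt_gauss_int (z : ℂ) :
    IntegrableOn (fun t : ℝ => Complex.exp (-(z + (t : ℂ)) ^ 2) * (-2 * (z + (t : ℂ))))
        (Set.Ioi (0 : ℝ)) ∧
    HasDerivAt (fun w : ℂ => ∫ t in Set.Ioi (0 : ℝ), Complex.exp (-(w + (t : ℂ)) ^ 2))
      (∫ t in Set.Ioi (0 : ℝ), Complex.exp (-(z + (t : ℂ)) ^ 2) * (-2 * (z + (t : ℂ)))) z := by
  set a : ℝ := ‖z‖ + 1 with ha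
  have h := hasDerivAt_integral_of_dominated_loc_of_deriv_le (μ := volume.restrict (Set.Ioi (0:ℝ)))
    (F := fun w (t : ℝ) => Complex.exp (-(w + (t : ℂ)) ^ 2))
    (F' := fun w (t : ℝ) => Complex.exp (-(w + (t : ℂ)) ^ 2) * (-2 * (w + (t : ℂ))))
    (x₀ := z)
    (bound := fun t : ℝ => 2 * ((a + t) * Real.exp (2 * a ^ 2 - (t - a) ^ 2)))
    (Metric.ball_mem_nhds z one_pos)
    (Filter.Eventually.of_forall fun x => (by continuity : Continuous fun t : ℝ =>
        Complex.exp (-(x + (t : ℂ)) ^ 2)).aestronglyMeasurable)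
    (integrableOn_gauss z)
    ((by continuity : Continuous fun t : ℝ =>
        Complex.exp (-(z + (t : ℂ)) ^ 2) * (-2 * (z + (t : ℂ)))).aestronglyMeasurable)
    ?_ ?_ ?_
  · exact h
  · -- bound
    rw [ae_restrict_iff' measurableSet_Ioi]
    refine Filter.Eventually.of_forall fun t ht x hx => ?_
    rw [Metric.mem_ball, Complex.dist_eq] at hx
    have ht' : (0:ℝ) < t := ht
    have hxa : ‖x‖ ≤ a := by
      have h := norm_sub_norm_le x z
      simp only [ha]; nlinarith [norm_nonneg (x - z)]
    have hre : |x.re| ≤ a := le_trans (Complex.abs_re_le_norm x) hxa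
    have him : |x.im| ≤ a := le_trans (Complex.abs_im_le_norm x) hxa
    rw [norm_mul, norm_gauss]
    have h1 : ‖-2 * (x + (t:ℂ))‖ ≤ 2 * (a + t) := by
      rw [norm_mul]
      have h2 : ‖x + (t:ℂ)‖ ≤ a + t := by
        refine le_trans (norm_add_le x _) ?_
        simp [Complex.norm_real, abs_of_pos ht']
        exact hxa
      have : ‖(-2 : ℂ)‖ = 2 := by norm_num
      rw [this]
      nlinarith [norm_nonneg (x + (t:ℂ))]
    have h2 : Real.exp (x.im ^ 2 - (x.re + t) ^ 2) ≤ Real.exp (2 * a ^ 2 - (t - a) ^ 2) := by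
      apply Real.exp_le_exp.2
      have habs : -a ≤ x.re := neg_le_of_abs_le hre
      nlinarith [_root_.sq_abs x.im, abs_nonneg x.im, sq_nonneg x.re]
    calc Real.exp (x.im ^ 2 - (x.re + t) ^ 2) * ‖-2 * (x + (t:ℂ))‖
        ≤ Real.exp (2 * a ^ 2 - (t - a) ^ 2) * (2 * (a + t)) := by
          apply mul_le_mul h2 h1 (norm_nonneg _) (Real.exp_pos _).le
      _ = 2 * ((a + t) * Real.exp (2 * a ^ 2 - (t - a) ^ 2)) := by ring
  · -- bound integrable
    have h1 := ((int_aux a (-a)).const_mul (2 * Real.exp (2 * a ^ 2))).integrableOn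
      (s := Set.Ioi (0:ℝ))
    refine h1.congr_fun ?_ measurableSet_Ioi
    intro t _
    simp only []
    rw [show (2 * a ^ 2 - (t - a) ^ 2) = 2*a^2 + -(t + -a)^2 by ring, Real.exp_add]
    ring
  · exact Filter.Eventually.of_forall fun t x _ => hasDerivAt_gauss t x

lemma tendsto_gauss (z : ℂ) :
    Filter.Tendsto (fun t : ℝ => Complex.exp (-(z + (t : ℂ)) ^ 2)) Filter.atTop (nhds 0) := by
  rw [tendsto_zero_iff_norm_tendsto_zero]
  simp only [norm_gauss]
  apply Real.tendsto_exp_atBot.comp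
  have h1 : Filter.Tendsto (fun t : ℝ => (z.re + t) ^ 2) Filter.atTop Filter.atTop := by
    exact (Filter.tendsto_pow_atTop (by norm_num)).comp
      (Filter.tendsto_atTop_add_const_left _ _ Filter.tendsto_id)
  have h2 := Filter.tendsto_neg_atTop_atBot.comp h1
  have h3 := Filter.tendsto_atBot_add_const_left Filter.atTop (z.im ^ 2) h2
  refine h3.congr fun t => ?_
  simp [Function.comp]
  ring

lemma integral_deriv_gauss (z : ℂ) :
    ∫ t in Set.Ioi (0 : ℝ), Complex.exp (-(z + (t : ℂ)) ^ 2) * (-2 * (z + (t : ℂ)))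
      = -Complex.exp (-z ^ 2) := by
  have h := integral_Ioi_of_hasDerivAt_of_tendsto (a := (0:ℝ)) (m := (0:ℂ))
    (f := fun t : ℝ => Complex.exp (-(z + (t : ℂ)) ^ 2))
    (f' := fun t : ℝ => Complex.exp (-(z + (t : ℂ)) ^ 2) * (-2 * (z + (t : ℂ))))
    ((by continuity : Continuous fun t : ℝ =>
        Complex.exp (-(z + (t : ℂ)) ^ 2)).continuousWithinAt)
    (fun t _ => by
      have h1 : HasDerivAt (fun w : ℂ => Complex.exp (-(z + w) ^ 2))
          (Complex.exp (-(z + (t : ℂ)) ^ 2) * (-2 * (z + (t : ℂ)))) (t : ℂ) := by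
        have h2 : HasDerivAt (fun w : ℂ => -(z + w) ^ 2) (-2 * (z + (t : ℂ))) (t : ℂ) := by
          have h := (((hasDerivAt_id (t : ℂ)).const_add z).pow 2).neg
          refine h.congr_deriv ?_
          simp
        exact h2.cexp
      exact h1.comp_ofReal)
    (hasDerivAt_gauss_int z).1
    (tendsto_gauss z)
  rw [h]
  simp

lemma hasDerivAt_cerfc (z : ℂ) :
    HasDerivAt cerfc (-(2 / (Real.sqrt Real.pi : ℂ)) * Complex.exp (-z ^ 2)) z := by
  have h := ((hasDerivAt_gauss_int z).2).const_mul (2 / (Real.sqrt Real.pi : ℂ))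
  rw [integral_deriv_gauss] at h
  have : cerfc = fun w : ℂ =>
      (2 / (Real.sqrt Real.pi : ℂ)) * ∫ t in Set.Ioi (0 : ℝ), Complex.exp (-(w + (t : ℂ)) ^ 2) :=
    rfl
  rw [this]
  refine h.congr_deriv ?_
  ring

lemma neg_I_sq (z : ℂ) : -(-I * z) ^ 2 = z ^ 2 := by
  have h : (-I * z) ^ 2 = I ^ 2 * z ^ 2 := by ring
  rw [h, Complex.I_sq]
  ring

lemma hasDerivAt_faddeeva (z : ℂ) :
    HasDerivAt faddeeva (-2 * z * faddeeva z + 2 * I / (Real.sqrt Real.pi : ℂ)) z := by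
  have h1 : HasDerivAt (fun w : ℂ => Complex.exp (-w ^ 2))
      (Complex.exp (-z ^ 2) * (-2 * z)) z := by
    have h := ((hasDerivAt_pow 2 z).neg).cexp
    refine h.congr_deriv ?_
    simp
    try ring
  have h2 : HasDerivAt (fun w : ℂ => cerfc (-I * w))
      (-(2 / (Real.sqrt Real.pi : ℂ)) * Complex.exp (-(-I * z) ^ 2) * (-I)) z := by
    have hin : HasDerivAt (fun w : ℂ => -I * w) (-I) z := by
      simpa using (hasDerivAt_id z).const_mul (-I)
    exact (hasDerivAt_cerfc (-I * z)).comp z hin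
  have h3 := h1.mul h2
  have key : Complex.exp (-z ^ 2) * (-(2 / (Real.sqrt Real.pi : ℂ))
      * Complex.exp (-(-I * z) ^ 2) * (-I)) = 2 * I / (Real.sqrt Real.pi : ℂ) := by
    rw [neg_I_sq]
    rw [show Complex.exp (-z ^ 2) * (-(2 / (Real.sqrt Real.pi : ℂ))
        * Complex.exp (z ^ 2) * (-I)) =
      Complex.exp (-z ^ 2) * Complex.exp (z ^ 2) * (2 * I / (Real.sqrt Real.pi : ℂ)) by ring]
    rw [← Complex.exp_add]
    simp
  have : faddeeva = fun w : ℂ => Complex.exp (-w ^ 2) * cerfc (-I * w) := rfl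
  rw [this]
  refine h3.congr_deriv ?_
  rw [key]
  have hb : (fun w : ℂ => Complex.exp (-w ^ 2) * cerfc (-I * w)) z
      = Complex.exp (-z ^ 2) * cerfc (-I * z) := rfl
  rw [hb]
  ring

lemma faddeeva_differentiable : Differentiable ℂ faddeeva :=
  fun z => (hasDerivAt_faddeeva z).differentiableAt

lemma iD_differentiable (m : ℕ) : Differentiable ℂ (iteratedDeriv m faddeeva) :=
  (faddeeva_differentiable.contDiff (n := ((m : ℕ) + 1 : ℕ))).differentiable_iteratedDeriv m
    (by exact_mod_cast lt_add_one (m : ℕ))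

lemma hasDerivAt_iD (m : ℕ) (z : ℂ) :
    HasDerivAt (iteratedDeriv m faddeeva) (iteratedDeriv (m + 1) faddeeva z) z := by
  have h := (iD_differentiable m z).hasDerivAt
  rwa [show deriv (iteratedDeriv m faddeeva) z = iteratedDeriv (m + 1) faddeeva z by
    rw [iteratedDeriv_succ]] at h

lemma deriv_faddeeva_eq : deriv faddeeva
    = fun z => -2 * z * faddeeva z + 2 * I / (Real.sqrt Real.pi : ℂ) :=
  funext fun z => (hasDerivAt_faddeeva z).deriv

lemma faddeeva_rec (m : ℕ) (z : ℂ) :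
    iteratedDeriv (m + 2) faddeeva z
      = -2 * z * iteratedDeriv (m + 1) faddeeva z
        - 2 * ((m : ℂ) + 1) * iteratedDeriv m faddeeva z := by
  induction m generalizing z with
  | zero =>
      have h1 : iteratedDeriv 1 faddeeva
          = fun z => -2 * z * faddeeva z + 2 * I / (Real.sqrt Real.pi : ℂ) := by
        rw [iteratedDeriv_one, deriv_faddeeva_eq]
      have h2 : HasDerivAt (fun z : ℂ => -2 * z * faddeeva z + 2 * I / (Real.sqrt Real.pi : ℂ))
          (-2 * faddeeva z + -2 * z * iteratedDeriv 1 faddeeva z) z := by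
        have ha : HasDerivAt (fun z : ℂ => -2 * z) (-2) z := by
          simpa using (hasDerivAt_id z).const_mul (-2 : ℂ)
        have hb : HasDerivAt faddeeva (iteratedDeriv 1 faddeeva z) z := by
          simpa [iteratedDeriv_zero] using hasDerivAt_iD 0 z
        have := (ha.mul hb).add_const (2 * I / (Real.sqrt Real.pi : ℂ))
        exact this
      have h3 : iteratedDeriv 2 faddeeva z = deriv (iteratedDeriv 1 faddeeva) z := by
        rw [iteratedDeriv_succ]
      rw [h3, h1, h2.deriv]
      simp [iteratedDeriv_zero, h1]
      ring
  | succ m ih =>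
      have h1 : iteratedDeriv (m + 3) faddeeva z = deriv (iteratedDeriv (m + 2) faddeeva) z := by
        rw [iteratedDeriv_succ]
      have h2 : iteratedDeriv (m + 2) faddeeva
          = fun z => -2 * z * iteratedDeriv (m + 1) faddeeva z
              - 2 * ((m : ℂ) + 1) * iteratedDeriv m faddeeva z := funext fun w => ih w
      have h3 : HasDerivAt (fun z : ℂ => -2 * z * iteratedDeriv (m + 1) faddeeva z
          - 2 * ((m : ℂ) + 1) * iteratedDeriv m faddeeva z)
          (-2 * iteratedDeriv (m + 1) faddeeva z + -2 * z * iteratedDeriv (m + 2) faddeeva z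
            - 2 * ((m : ℂ) + 1) * iteratedDeriv (m + 1) faddeeva z) z := by
        have ha : HasDerivAt (fun z : ℂ => -2 * z) (-2) z := by
          simpa using (hasDerivAt_id z).const_mul (-2 : ℂ)
        have := (ha.mul (hasDerivAt_iD (m + 1) z)).sub
          ((hasDerivAt_iD m z).const_mul (2 * ((m : ℂ) + 1)))
        exact this
      rw [h1, h2, h3.deriv, ih z]
      push_cast
      ring

noncomputable def Gfun (m : ℕ) (z : ℂ) : ℂ :=
  iteratedDeriv m faddeeva z * iteratedDeriv (m + 1) faddeeva (-z)
    + iteratedDeriv (m + 1) faddeeva z * iteratedDeriv m faddeeva (-z)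

lemma hasDerivAt_iD_neg (m : ℕ) (z : ℂ) :
    HasDerivAt (fun z : ℂ => iteratedDeriv m faddeeva (-z))
      (-iteratedDeriv (m + 1) faddeeva (-z)) z := by
  have h := (hasDerivAt_iD m (-z)).comp z (hasDerivAt_neg z)
  exact h.congr_deriv (by ring)

lemma hasDerivAt_G (m : ℕ) (z : ℂ) : HasDerivAt (Gfun m) (-2 * z * Gfun m z) z := by
  have h1 := ((hasDerivAt_iD m z).mul (hasDerivAt_iD_neg (m + 1) z)).add
    ((hasDerivAt_iD (m + 1) z).mul (hasDerivAt_iD_neg m z))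
  have h2 : Gfun m = fun z => iteratedDeriv m faddeeva z * iteratedDeriv (m + 1) faddeeva (-z)
      + iteratedDeriv (m + 1) faddeeva z * iteratedDeriv m faddeeva (-z) := rfl
  rw [h2]
  refine h1.congr_deriv ?_
  have hbeta : (fun z : ℂ => iteratedDeriv m faddeeva z * iteratedDeriv (m + 1) faddeeva (-z)
      + iteratedDeriv (m + 1) faddeeva z * iteratedDeriv m faddeeva (-z)) z
      = iteratedDeriv m faddeeva z * iteratedDeriv (m + 1) faddeeva (-z)
        + iteratedDeriv (m + 1) faddeeva z * iteratedDeriv m faddeeva (-z) := rfl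
  rw [hbeta, show m + 1 + 1 = m + 2 from rfl, faddeeva_rec m z, faddeeva_rec m (-z)]
  ring

lemma G_const (m : ℕ) (z : ℂ) : Complex.exp (z ^ 2) * Gfun m z = Gfun m 0 := by
  have hdiff : Differentiable ℂ (fun z : ℂ => Complex.exp (z ^ 2) * Gfun m z) := by
    intro w
    exact (((hasDerivAt_pow 2 w).cexp).mul (hasDerivAt_G m w)).differentiableAt
  have hderiv : ∀ w : ℂ, deriv (fun z : ℂ => Complex.exp (z ^ 2) * Gfun m z) w = 0 := by
    intro w
    have h := ((hasDerivAt_pow 2 w).cexp).mul (hasDerivAt_G m w)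
    exact h.deriv.trans (by ring)
  have h := is_const_of_deriv_eq_zero hdiff hderiv z 0
  norm_num at h
  exact h

lemma sqrt_pi_ne : ((Real.sqrt Real.pi : ℝ) : ℂ) ≠ 0 := by
  norm_cast
  exact (Real.sqrt_pos.2 Real.pi_pos).ne'

lemma cerfc_zero : cerfc 0 = 1 := by
  have h1 : ∀ t : ℝ, Complex.exp (-((0 : ℂ) + (t : ℂ)) ^ 2) = ((Real.exp (-t ^ 2) : ℝ) : ℂ) := by
    intro t
    rw [Complex.ofReal_exp]
    norm_num
  have h2 : (∫ t in Set.Ioi (0 : ℝ), Complex.exp (-((0 : ℂ) + (t : ℂ)) ^ 2))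
      = ((Real.sqrt Real.pi / 2 : ℝ) : ℂ) := by
    simp_rw [h1]
    have h4 : (∫ t in Set.Ioi (0 : ℝ), ((Real.exp (-t ^ 2) : ℝ) : ℂ))
        = (((∫ t in Set.Ioi (0 : ℝ), Real.exp (-t ^ 2)) : ℝ) : ℂ) := integral_ofReal
    rw [h4]
    congr 1
    have h3 := integral_gaussian_Ioi 1
    rw [show (fun t : ℝ => Real.exp (-t ^ 2)) = fun t : ℝ => Real.exp (-1 * t ^ 2) by
      funext t; rw [neg_one_mul]] at *
    rw [h3]
    norm_num
  show (2 / (Real.sqrt Real.pi : ℂ)) * _ = 1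
  rw [h2]
  push_cast
  field_simp

lemma faddeeva_zero : faddeeva 0 = 1 := by
  show Complex.exp (-(0 : ℂ) ^ 2) * cerfc (-I * 0) = 1
  norm_num
  exact cerfc_zero

lemma iD_one_zero : iteratedDeriv 1 faddeeva 0 = 2 * I / (Real.sqrt Real.pi : ℂ) := by
  rw [iteratedDeriv_one, deriv_faddeeva_eq]
  simp

lemma iD_zero_rec (m : ℕ) : iteratedDeriv (m + 2) faddeeva 0
    = -2 * ((m : ℂ) + 1) * iteratedDeriv m faddeeva 0 := by
  have := faddeeva_rec m 0
  simpa using this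

lemma G_zero (m : ℕ) :
    Gfun m 0 = (-2 : ℂ) ^ m * (m.factorial : ℂ) * (4 * I / (Real.sqrt Real.pi : ℂ)) := by
  induction m with
  | zero =>
      simp only [Gfun, neg_zero, zero_add, iteratedDeriv_zero, faddeeva_zero, iD_one_zero,
        pow_zero, Nat.factorial_zero, Nat.cast_one]
      ring
  | succ m ih =>
      simp only [Gfun, neg_zero] at ih ⊢
      rw [show m + 1 + 1 = m + 2 from rfl, iD_zero_rec m]
      push_cast [Nat.factorial_succ]
      linear_combination (-2 * ((m : ℂ) + 1)) * ih

lemma G_val (m : ℕ) (z : ℂ) :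
    Gfun m z = Complex.exp (-z ^ 2)
      * ((-2 : ℂ) ^ m * (m.factorial : ℂ) * (4 * I / (Real.sqrt Real.pi : ℂ))) := by
  have h := G_const m z
  rw [G_zero] at h
  rw [← h, ← mul_assoc, ← Complex.exp_add]
  simp

lemma den_eq (m : ℕ) :
    Real.sqrt ((m.factorial : ℝ) * 2 ^ (m + 2)) * Real.sqrt ((((m+1).factorial : ℕ) : ℝ) * 2 ^ (m + 3))
      = (m.factorial : ℝ) * 2 ^ (m + 2) * (Real.sqrt 2 * Real.sqrt (((m+1 : ℕ) : ℝ))) := by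
  rw [← Real.sqrt_mul (by positivity)]
  rw [show (m.factorial : ℝ) * 2 ^ (m + 2) * ((((m+1).factorial : ℕ) : ℝ) * 2 ^ (m + 3))
      = ((m.factorial : ℝ) * 2 ^ (m + 2)) ^ 2 * (2 * (((m+1 : ℕ) : ℝ))) by
    push_cast [Nat.factorial_succ]; ring]
  rw [Real.sqrt_mul (by positivity), Real.sqrt_sq (by positivity),
    Real.sqrt_mul (by norm_num : (0:ℝ) ≤ 2)]

end Aux

/-- `I_n^+(λ) = (-1)^{n-1} e^{λ²/2} w^{(n-1)}(λ/√2) / √((n-1)! 2^{n+1})`. -/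
noncomputable def Iplus (lam : ℂ) (n : ℕ) : ℂ :=
  ((-1) ^ (n - 1) * Complex.exp (lam ^ 2 / 2)
      * iteratedDeriv (n - 1) faddeeva (lam / (Real.sqrt 2 : ℂ)))
    / (Real.sqrt ((n - 1).factorial * 2 ^ (n + 1)) : ℂ)

/-- `I_n^-(λ) = e^{λ²/2} w^{(n-1)}(-λ/√2) / √((n-1)! 2^{n+1})`. -/
noncomputable def Iminus (lam : ℂ) (n : ℕ) : ℂ :=
  (Complex.exp (lam ^ 2 / 2) * iteratedDeriv (n - 1) faddeeva (-lam / (Real.sqrt 2 : ℂ)))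
    / (Real.sqrt ((n - 1).factorial * 2 ^ (n + 1)) : ℂ)

/-- The discrete Wronskian of `I^+(λ)` and `I^-(λ)` equals `i e^{λ²/2}/√(2π)` for every
`n ≥ 1`; in particular it is constant and nonzero. -/
theorem wronskian_Iplus_Iminus (lam : ℂ) (n : ℕ) (hn : 1 ≤ n) :
    (Real.sqrt (n : ℝ) : ℂ)
        * (Iplus lam n * Iminus lam (n + 1) - Iplus lam (n + 1) * Iminus lam n)
      = Complex.I * Complex.exp (lam ^ 2 / 2) / (Real.sqrt (2 * Real.pi) : ℂ) := by
  obtain ⟨m, rfl⟩ : ∃ m, n = m + 1 := ⟨n - 1, (Nat.succ_pred_eq_of_pos hn).symm⟩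
  set z : ℂ := lam / ((Real.sqrt 2 : ℝ) : ℂ) with hzdef
  have hneg : -lam / ((Real.sqrt 2 : ℝ) : ℂ) = -z := by rw [hzdef, neg_div]
  simp only [Iplus, Iminus, Nat.add_sub_cancel, hneg]
  rw [← hzdef]
  rw [show m + 1 + 1 + 1 = m + 3 from rfl, show m + 1 + 1 = m + 2 from rfl]
  set E := Complex.exp (lam ^ 2 / 2) with hE
  set X := iteratedDeriv m faddeeva z with hX
  set X' := iteratedDeriv (m + 1) faddeeva z with hX'
  set Y := iteratedDeriv m faddeeva (-z) with hY
  set Y' := iteratedDeriv (m + 1) faddeeva (-z) with hY'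
  set D1 : ℂ := ((Real.sqrt ((m.factorial : ℝ) * 2 ^ (m + 2)) : ℝ) : ℂ) with hD1def
  set D2 : ℂ := ((Real.sqrt ((((m + 1).factorial : ℕ) : ℝ) * 2 ^ (m + 3)) : ℝ) : ℂ) with hD2def
  set s2 : ℂ := ((Real.sqrt 2 : ℝ) : ℂ) with hs2def
  set sp : ℂ := ((Real.sqrt Real.pi : ℝ) : ℂ) with hspdef
  set sm1 : ℂ := ((Real.sqrt (((m + 1 : ℕ) : ℝ)) : ℝ) : ℂ) with hsm1def
  have hD1 : D1 ≠ 0 := by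
    rw [hD1def]
    exact Complex.ofReal_ne_zero.2 (Real.sqrt_ne_zero'.2 (by positivity))
  have hD2 : D2 ≠ 0 := by
    rw [hD2def]
    exact Complex.ofReal_ne_zero.2 (Real.sqrt_ne_zero'.2 (by positivity))
  have hs2 : s2 ≠ 0 := by
    rw [hs2def]
    exact Complex.ofReal_ne_zero.2 (Real.sqrt_ne_zero'.2 (by norm_num))
  have hsp : sp ≠ 0 := by
    rw [hspdef]
    exact Complex.ofReal_ne_zero.2 (Real.sqrt_ne_zero'.2 Real.pi_pos)
  have hz2 : z ^ 2 = lam ^ 2 / 2 := by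
    have hs2sq : s2 ^ 2 = 2 := by
      rw [hs2def, ← Complex.ofReal_pow, Real.sq_sqrt (by norm_num : (0:ℝ) ≤ 2)]
      norm_num
    rw [hzdef, div_pow, hs2sq]
  have hEE : E * E * Complex.exp (-z ^ 2) = E := by
    rw [hE, ← Complex.exp_add, ← Complex.exp_add, hz2]
    congr 1
    ring
  have hG : X * Y' + X' * Y
      = Complex.exp (-z ^ 2) * ((-2 : ℂ) ^ m * (m.factorial : ℂ) * (4 * I / sp)) :=
    G_val m z
  have hGsp : sp * (X * Y' + X' * Y)
      = Complex.exp (-z ^ 2) * ((-2 : ℂ) ^ m * (m.factorial : ℂ) * (4 * I)) := by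
    rw [hG]
    field_simp
  have hD : D1 * D2 = (m.factorial : ℂ) * 2 ^ (m + 2) * (s2 * sm1) := by
    rw [hD1def, hD2def, ← Complex.ofReal_mul, den_eq m, hs2def, hsm1def]
    push_cast
    ring
  have h2pi : ((Real.sqrt (2 * Real.pi) : ℝ) : ℂ) = s2 * sp := by
    rw [hs2def, hspdef, ← Complex.ofReal_mul]
    norm_cast
    exact Real.sqrt_mul (by norm_num) _
  have hm2 : ((-2 : ℂ)) ^ m = (-1) ^ m * 2 ^ m := by
    rw [← mul_pow]
    norm_num
  have hmm : ((-1 : ℂ)) ^ m * (-1) ^ m = 1 := by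
    rw [← mul_pow]
    norm_num
  rw [div_mul_div_comm, div_mul_div_comm, mul_comm D2 D1, div_sub_div_same, mul_div_assoc',
    h2pi, div_eq_div_iff (mul_ne_zero hD1 hD2) (mul_ne_zero hs2 hsp), hD]
  linear_combination (sm1 * s2 * E * E * (-1 : ℂ) ^ m) * hGsp
    + (sm1 * s2 * E * E * (-1 : ℂ) ^ m * Complex.exp (-z ^ 2) * (m.factorial : ℂ) * 4 * I) * hm2
    + (sm1 * s2 * E * E * Complex.exp (-z ^ 2) * (2 : ℂ) ^ m * (m.factorial : ℂ) * 4 * I) * hmm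
    + (sm1 * s2 * (2 : ℂ) ^ m * (m.factorial : ℂ) * 4 * I) * hEE
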